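/- Let Y be a Fraïssé fence. Then the subspace of Y consisting of the points whose connected component is a singleton is homeomorphic to the Baire space ℕ^ℕ (the countable power of the discrete space ℕ, with the product topology). -/

import Mathlib

open Set

/-- A subset of a topological space is an arc if it is homeomorphic to the unit interval. -/
def IsArc {Y : Type*} [TopologicalSpace Y] (A : Set Y) : Prop :=
  Nonempty (A ≃ₜ unitInterval)

/-- A fence is a compact metrizable space whose connected components are singletons or arcs. -/
def IsFence (Y : Type*) [TopologicalSpace Y] : Prop :=
  CompactSpace Y ∧ TopologicalSpace.MetrizableSpace Y ∧
    ∀ x : Y, connectedComponent x = {x} ∨ IsArc (connectedComponent x)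

/-- A closed partial order on a topological space. -/
def IsClosedPartialOrder {Y : Type*} [TopologicalSpace Y] (r : Y → Y → Prop) : Prop :=
  IsClosed {p : Y × Y | r p.1 p.2} ∧ Reflexive r ∧ AntiSymmetric r ∧ Transitive r

/-- A closed partial order whose restriction to each connected component is a total order. -/
def IsCompatibleOrder {Y : Type*} [TopologicalSpace Y] (r : Y → Y → Prop) : Prop :=
  IsClosedPartialOrder r ∧
    ∀ x : Y, ∀ y ∈ connectedComponent x, ∀ z ∈ connectedComponent x, r y z ∨ r z y

/-- A smooth fence is a fence admitting a closed partial order whose restriction to each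
connected component is a total order. -/
def IsSmoothFence (Y : Type*) [TopologicalSpace Y] : Prop :=
  IsFence Y ∧ ∃ r : Y → Y → Prop, IsCompatibleOrder r

/-- A strongly compatible order: a compatible closed partial order such that any two
comparable points lie in the same connected component. -/
def IsStronglyCompatibleOrder {Y : Type*} [TopologicalSpace Y] (r : Y → Y → Prop) : Prop :=
  IsCompatibleOrder r ∧ ∀ x y : Y, r x y → y ∈ connectedComponent x

/-- `x` is one of the two endpoints of the arc `A`. -/
def IsEndpointOfArc {Y : Type*} [TopologicalSpace Y] (A : Set Y) (x : Y) : Prop :=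
  ∃ (h : A ≃ₜ unitInterval) (hx : x ∈ A), h ⟨x, hx⟩ = 0 ∨ h ⟨x, hx⟩ = 1

/-- A point is an endpoint of the space if, whenever it belongs to an arc, it is one of
its two endpoints. -/
def IsEndpoint {Y : Type*} [TopologicalSpace Y] (x : Y) : Prop :=
  ∀ A : Set Y, IsArc A → x ∈ A → IsEndpointOfArc A x

/-- A Fraïssé fence: a nonempty smooth fence such that for any two open sets meeting a
common connected component there is an arc component with one endpoint in each. -/
def IsFraisseFence (Y : Type*) [TopologicalSpace Y] : Prop :=
  Nonempty Y ∧ IsSmoothFence Y ∧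
    ∀ O O' : Set Y, IsOpen O → IsOpen O' →
      (∃ z : Y, (O ∩ connectedComponent z).Nonempty ∧ (O' ∩ connectedComponent z).Nonempty) →
      ∃ w : Y, IsArc (connectedComponent w) ∧
        ∃ a b : Y, a ≠ b ∧ a ∈ O ∧ b ∈ O' ∧
          IsEndpointOfArc (connectedComponent w) a ∧ IsEndpointOfArc (connectedComponent w) b

section FraisseFenceAux
open Metric

-- connectedness of unitInterval minus an endpoint
theorem preconn_ne (c : unitInterval) (hc : c = 0 ∨ c = 1) :
    IsPreconnected {s : unitInterval | s ≠ c} := by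
  have hind : Topology.IsInducing (Subtype.val : unitInterval → ℝ) := Topology.IsInducing.subtypeVal
  rcases hc with hc | hc
  · have : {s : unitInterval | s ≠ c} = Subtype.val ⁻¹' (Set.Ioc (0:ℝ) 1) := by
      ext s
      subst hc
      simp only [mem_setOf_eq, mem_preimage, Set.mem_Ioc]
      constructor
      · intro h
        refine ⟨lt_of_le_of_ne s.2.1 ?_, s.2.2⟩
        intro h0
        exact h (by ext; exact h0.symm)
      · rintro ⟨h1, _⟩ h2
        rw [h2] at h1
        simp at h1
    rw [this, ← hind.isPreconnected_image]
    have himg : Subtype.val '' (Subtype.val ⁻¹' (Set.Ioc (0:ℝ) 1) : Set unitInterval)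
        = Set.Ioc (0:ℝ) 1 := by
      rw [Set.image_preimage_eq_inter_range, Subtype.range_coe]
      exact Set.inter_eq_self_of_subset_left Set.Ioc_subset_Icc_self
    rw [himg]
    exact isPreconnected_Ioc
  · have : {s : unitInterval | s ≠ c} = Subtype.val ⁻¹' (Set.Ico (0:ℝ) 1) := by
      ext s
      subst hc
      simp only [mem_setOf_eq, mem_preimage, Set.mem_Ico]
      constructor
      · intro h
        refine ⟨s.2.1, lt_of_le_of_ne s.2.2 ?_⟩
        intro h0
        exact h (by ext; exact h0)
      · rintro ⟨_, h1⟩ h2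
        rw [h2] at h1
        simp at h1
    rw [this, ← hind.isPreconnected_image]
    have himg : Subtype.val '' (Subtype.val ⁻¹' (Set.Ico (0:ℝ) 1) : Set unitInterval)
        = Set.Ico (0:ℝ) 1 := by
      rw [Set.image_preimage_eq_inter_range, Subtype.range_coe]
      exact Set.inter_eq_self_of_subset_left Set.Ico_subset_Icc_self
    rw [himg]
    exact isPreconnected_Ico

theorem preconn_arc_diff {Y : Type*} [TopologicalSpace Y] {A : Set Y} {a : Y}
    (h : A ≃ₜ unitInterval) (ha : a ∈ A) (h01 : h ⟨a, ha⟩ = 0 ∨ h ⟨a, ha⟩ = 1) :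
    IsPreconnected (A \ {a}) := by
  have h1 : IsPreconnected {s : unitInterval | s ≠ h ⟨a, ha⟩} := preconn_ne _ h01
  have h2 : IsPreconnected ((Subtype.val ∘ h.symm) '' {s : unitInterval | s ≠ h ⟨a, ha⟩}) :=
    h1.image _ (continuous_subtype_val.comp h.symm.continuous).continuousOn
  convert h2 using 1
  ext y
  simp only [Set.mem_image, Function.comp_apply, mem_setOf_eq, Set.mem_diff, Set.mem_singleton_iff]
  constructor
  · rintro ⟨hyA, hya⟩
    refine ⟨h ⟨y, hyA⟩, ?_, by simp⟩
    intro heq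
    have h3 : (⟨y, hyA⟩ : A) = ⟨a, ha⟩ := h.injective (by rw [heq])
    exact hya (congrArg Subtype.val h3)
  · rintro ⟨s, hs, rfl⟩
    refine ⟨(h.symm s).2, ?_⟩
    intro heq
    apply hs
    have : h.symm s = ⟨a, ha⟩ := Subtype.ext heq
    rw [← this, h.apply_symm_apply]


theorem clopen_sandwich (Y : Type*) [MetricSpace Y] [CompactSpace Y] (x : Y) (U : Set Y)
    (hU : IsOpen U) (hCU : connectedComponent x ⊆ U) :
    ∃ V : Set Y, IsClopen V ∧ connectedComponent x ⊆ V ∧ V ⊆ U := by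
  have h := connectedComponent_eq_iInter_isClopen x
  have hcov : Uᶜ ⊆ ⋃ s : {s : Set Y // IsClopen s ∧ x ∈ s}, (↑s : Set Y)ᶜ := by
    intro y hy
    by_contra hyn
    simp only [mem_iUnion, not_exists, mem_compl_iff, not_not] at hyn
    have : y ∈ connectedComponent x := by
      rw [h, mem_iInter]; exact fun s => hyn s
    exact hy (hCU this)
  have hUc : IsCompact Uᶜ := (hU.isClosed_compl).isCompact
  obtain ⟨t, ht⟩ := hUc.elim_finite_subcover _ (fun s => s.2.1.compl.isOpen) hcov
  classical
  refine ⟨⋂ s ∈ t, (s : Set Y), ?_, ?_, ?_⟩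
  · exact isClopen_biInter_finset (fun s _ => s.2.1)
  · intro y hy
    simp only [mem_iInter]
    intro s _
    rw [h, mem_iInter] at hy
    exact hy s
  · intro y hy
    by_contra hyU
    obtain ⟨s, hst, hys⟩ := by simpa only [mem_iUnion, mem_compl_iff] using ht hyU
    simp only [mem_iInter] at hy
    exact hys (hy s hst)

section Fence
variable {Y : Type*} [MetricSpace Y] [CompactSpace Y]
variable {r : Y → Y → Prop} (hrcl : IsClosed {p : Y × Y | r p.1 p.2})
  (hrefl : Reflexive r) (hanti : AntiSymmetric r)
  (htot : ∀ x : Y, ∀ y ∈ connectedComponent x, ∀ z ∈ connectedComponent x, r y z ∨ r z y)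

include hrcl hrefl hanti htot in
/-- an endpoint of an arc component is an extremum of the order -/
theorem endpoint_extremum {w a : Y}
    (hep : IsEndpointOfArc (connectedComponent w) a) :
    (∀ y ∈ connectedComponent w, r a y) ∨ (∀ y ∈ connectedComponent w, r y a) := by
  obtain ⟨h, ha, h01⟩ := hep
  by_contra hcon
  push_neg at hcon
  obtain ⟨⟨p, hpA, hpr⟩, ⟨q, hqA, hqr⟩⟩ := hcon
  have hL : IsOpen {u : Y | ¬ r a u} :=
    (hrcl.preimage (Continuous.prodMk_right a)).isOpen_compl
  have hU : IsOpen {u : Y | ¬ r u a} :=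
    (hrcl.preimage (continuous_id.prodMk continuous_const)).isOpen_compl
  have hpre : IsPreconnected (connectedComponent w \ {a}) := preconn_arc_diff h ha h01
  have hcover : connectedComponent w \ {a} ⊆ {u : Y | ¬ r a u} ∪ {u : Y | ¬ r u a} := by
    rintro u ⟨huA, hua⟩
    simp only [Set.mem_singleton_iff] at hua
    by_contra hc
    simp only [Set.mem_union, mem_setOf_eq, not_or, not_not] at hc
    exact hua (hanti hc.2 hc.1)
  have hp' : p ∈ connectedComponent w \ {a} := ⟨hpA, fun hpa => hpr (hpa ▸ hrefl a)⟩
  have hq' : q ∈ connectedComponent w \ {a} := ⟨hqA, fun hqa => hqr (hqa ▸ hrefl a)⟩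
  obtain ⟨u, ⟨huA, -⟩, hu1, hu2⟩ := hpre _ _ hL hU hcover ⟨p, hp', hpr⟩ ⟨q, hq', hqr⟩
  cases htot w u huA a ha with
  | inl hh => exact hu2 hh
  | inr hh => exact hu1 hh

include hrcl hrefl hanti htot in
/-- arcs whose two endpoints are close together are entirely small -/
theorem small_arc {η : ℝ} (hη : 0 < η) :
    ∃ ε > 0, ∀ (w a b : Y), a ≠ b →
      IsEndpointOfArc (connectedComponent w) a → IsEndpointOfArc (connectedComponent w) b →
      dist a b ≤ ε → Metric.diam (connectedComponent w) ≤ η := by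
  by_contra hcon
  push_neg at hcon
  have key : ∀ n : ℕ, ∃ (w a b : Y), a ≠ b ∧
      IsEndpointOfArc (connectedComponent w) a ∧ IsEndpointOfArc (connectedComponent w) b ∧
      dist a b ≤ 1 / (n + 1) ∧ η < Metric.diam (connectedComponent w) := by
    intro n
    obtain ⟨w, a, b, h2, h3, h4, h5, h6⟩ := hcon (1 / (n+1)) (by positivity)
    exact ⟨w, a, b, h2, h3, h4, h5, h6⟩
  choose w a b hne hepa hepb hdist hdiam using key
  -- pick bottom p n and top q n among the two endpoints
  have hsplit : ∀ n : ℕ, ∃ p q : Y, p ∈ connectedComponent (w n) ∧ q ∈ connectedComponent (w n)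
      ∧ dist p q ≤ 1 / (n + 1) ∧ ∀ y ∈ connectedComponent (w n), r p y ∧ r y q := by
    intro n
    have hamem : a n ∈ connectedComponent (w n) := (hepa n).choose_spec.choose
    have hbmem : b n ∈ connectedComponent (w n) := (hepb n).choose_spec.choose
    have hea := endpoint_extremum hrcl hrefl hanti htot (hepa n)
    have heb := endpoint_extremum hrcl hrefl hanti htot (hepb n)
    cases hea with
    | inl hbot =>
      cases heb with
      | inl hbot' => exact absurd (hanti (hbot _ hbmem) (hbot' _ hamem)) (hne n)
      | inr htop => exact ⟨a n, b n, hamem, hbmem, hdist n, fun y hy => ⟨hbot y hy, htop y hy⟩⟩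
    | inr htop =>
      cases heb with
      | inl hbot => exact ⟨b n, a n, hbmem, hamem, (dist_comm (a n) (b n)) ▸ hdist n,
          fun y hy => ⟨hbot y hy, htop y hy⟩⟩
      | inr htop' => exact absurd (hanti (htop' _ hamem) (htop _ hbmem)) (hne n)
  choose p q hpmem hqmem hpq hbetween using hsplit
  -- pick u n far from p n
  have hfar : ∀ n : ℕ, ∃ u ∈ connectedComponent (w n), η / 2 ≤ dist u (p n) := by
    intro n
    have hb : Bornology.IsBounded (connectedComponent (w n)) :=
      (isClosed_connectedComponent.isCompact).isBounded
    by_contra hc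
    push_neg at hc
    have : Metric.diam (connectedComponent (w n)) ≤ η := by
      apply Metric.diam_le_of_forall_dist_le hη.le
      intro x hx y hy
      calc dist x y ≤ dist x (p n) + dist (p n) y := dist_triangle _ _ _
        _ ≤ η/2 + η/2 := by
            have h1 := hc x hx
            have h2 := hc y hy
            rw [dist_comm (p n) y]
            linarith
        _ = η := by ring
    exact absurd this (not_le.2 (hdiam n))
  choose u humem hufar using hfar
  -- extract convergent subsequences
  obtain ⟨x, -, φ1, hφ1, hx⟩ := isCompact_univ.tendsto_subseq (x := p) (fun n => Set.mem_univ _)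
  obtain ⟨x2, -, φ2, hφ2, hx2⟩ :=
    isCompact_univ.tendsto_subseq (x := fun n => q (φ1 n)) (fun n => Set.mem_univ _)
  obtain ⟨z, -, φ3, hφ3, hz⟩ :=
    isCompact_univ.tendsto_subseq (x := fun n => u (φ1 (φ2 n))) (fun n => Set.mem_univ _)
  set ψ : ℕ → ℕ := fun n => φ1 (φ2 (φ3 n)) with hψdef
  have hψ3 : Filter.Tendsto φ3 Filter.atTop Filter.atTop := hφ3.tendsto_atTop
  have hψ23 : Filter.Tendsto (fun n => φ2 (φ3 n)) Filter.atTop Filter.atTop :=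
    (hφ2.tendsto_atTop).comp hψ3
  have hψt : Filter.Tendsto ψ Filter.atTop Filter.atTop := (hφ1.tendsto_atTop).comp hψ23
  have hpψ : Filter.Tendsto (fun n => p (ψ n)) Filter.atTop (nhds x) := hx.comp hψ23
  have hqψ : Filter.Tendsto (fun n => q (ψ n)) Filter.atTop (nhds x2) := hx2.comp hψ3
  have huψ : Filter.Tendsto (fun n => u (ψ n)) Filter.atTop (nhds z) := hz
  -- x = x2
  have hxx2 : x = x2 := by
    have hdt : Filter.Tendsto (fun n => dist (p (ψ n)) (q (ψ n))) Filter.atTop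
        (nhds (dist x x2)) := hpψ.dist hqψ
    have h0 : Filter.Tendsto (fun n => dist (p (ψ n)) (q (ψ n))) Filter.atTop (nhds 0) := by
      apply squeeze_zero (fun n => dist_nonneg) (fun n => hpq (ψ n))
      exact (tendsto_one_div_add_atTop_nhds_zero_nat).comp hψt
    have := tendsto_nhds_unique hdt h0
    exact dist_eq_zero.mp this
  -- closed order limits
  have hrz1 : r x z := by
    refine hrcl.mem_of_tendsto (hpψ.prodMk_nhds huψ) (Filter.Eventually.of_forall fun n => ?_)
    exact (hbetween (ψ n) (u (ψ n)) (humem (ψ n))).1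
  have hrz2 : r z x := by
    rw [hxx2]
    refine hrcl.mem_of_tendsto (huψ.prodMk_nhds hqψ) (Filter.Eventually.of_forall fun n => ?_)
    exact (hbetween (ψ n) (u (ψ n)) (humem (ψ n))).2
  have hzx : z = x := hanti hrz2 hrz1
  have hdzx : η / 2 ≤ dist z x := by
    have hdt : Filter.Tendsto (fun n => dist (u (ψ n)) (p (ψ n))) Filter.atTop
        (nhds (dist z x)) := huψ.dist hpψ
    exact ge_of_tendsto hdt (Filter.Eventually.of_forall fun n => hufar (ψ n))
  rw [hzx, dist_self] at hdzx
  linarith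

variable (hfr : ∀ O O' : Set Y, IsOpen O → IsOpen O' →
      (∃ z : Y, (O ∩ connectedComponent z).Nonempty ∧ (O' ∩ connectedComponent z).Nonempty) →
      ∃ w : Y, IsArc (connectedComponent w) ∧
        ∃ a b : Y, a ≠ b ∧ a ∈ O ∧ b ∈ O' ∧
          IsEndpointOfArc (connectedComponent w) a ∧ IsEndpointOfArc (connectedComponent w) b)

include hrcl hrefl hanti htot hfr in
/-- inside any nonempty open set there is a small nonempty clopen set -/
theorem shrink {V : Set Y} (hV : IsOpen V) (hne : V.Nonempty) {δ : ℝ} (hδ : 0 < δ) :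
    ∃ V' : Set Y, IsClopen V' ∧ V'.Nonempty ∧ V' ⊆ V ∧ Metric.diam V' ≤ δ := by
  obtain ⟨x0, hx0⟩ := hne
  obtain ⟨ρ, hρ, hball⟩ := Metric.isOpen_iff.mp hV x0 hx0
  set η : ℝ := min (δ/5) (ρ/5) with hηdef
  have hη : 0 < η := lt_min (by linarith) (by linarith)
  obtain ⟨ε0, hε0, hsmall⟩ := small_arc hrcl hrefl hanti htot (Y := Y) hη
  set r0 : ℝ := min (ε0/2) (ρ/5) with hr0def
  have hr0 : 0 < r0 := lt_min (by linarith) (by linarith)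
  obtain ⟨w, harc, a, b, hab, haO, hbO, hepa, hepb⟩ := hfr (Metric.ball x0 r0) (Metric.ball x0 r0)
    Metric.isOpen_ball Metric.isOpen_ball
    ⟨x0, ⟨x0, Metric.mem_ball_self hr0, mem_connectedComponent⟩,
        ⟨x0, Metric.mem_ball_self hr0, mem_connectedComponent⟩⟩
  have hdab : dist a b ≤ ε0 := by
    have h1 := Metric.mem_ball.mp haO
    have h2 := Metric.mem_ball.mp hbO
    have h3 : r0 ≤ ε0 / 2 := min_le_left _ _
    calc dist a b ≤ dist a x0 + dist x0 b := dist_triangle _ _ _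
      _ ≤ ε0 := by rw [dist_comm x0 b]; linarith
  have hdiamA : Metric.diam (connectedComponent w) ≤ η := hsmall w a b hab hepa hepb hdab
  obtain ⟨_, haA, -⟩ := hepa
  have hbdd : Bornology.IsBounded (connectedComponent w) :=
    (isClosed_connectedComponent.isCompact).isBounded
  have hAball : connectedComponent w ⊆ Metric.ball a (2*η) := by
    intro y hy
    have := Metric.dist_le_diam_of_mem hbdd hy haA
    exact Metric.mem_ball.mpr (by linarith)
  have hsub : Metric.ball a (2*η) ⊆ V := by
    intro y hy
    apply hball
    have h1 := Metric.mem_ball.mp hy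
    have h2 := Metric.mem_ball.mp haO
    have h3 : r0 ≤ ρ/5 := min_le_right _ _
    have h4 : η ≤ ρ/5 := min_le_right _ _
    exact Metric.mem_ball.mpr (by calc dist y x0 ≤ dist y a + dist a x0 := dist_triangle _ _ _
      _ < ρ := by linarith)
  have hcompa : connectedComponent a = connectedComponent w :=
    (connectedComponent_eq haA).symm
  obtain ⟨V', hV'clopen, hV'sup, hV'sub⟩ := clopen_sandwich Y a (Metric.ball a (2*η))
    Metric.isOpen_ball (hcompa ▸ hAball)
  refine ⟨V', hV'clopen, ⟨a, hV'sup mem_connectedComponent⟩, hV'sub.trans hsub, ?_⟩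
  calc Metric.diam V' ≤ Metric.diam (Metric.ball a (2*η)) :=
        Metric.diam_mono hV'sub Metric.isBounded_ball
    _ ≤ 2 * (2*η) := Metric.diam_ball (by linarith)
    _ ≤ δ := by have : η ≤ δ/5 := min_le_left _ _; linarith

include hrcl hrefl hanti htot hfr in
/-- every nonempty open set contains a point whose component is a singleton -/
theorem dense_sing {V : Set Y} (hV : IsOpen V) (hne : V.Nonempty) :
    ∃ x ∈ V, connectedComponent x = {x} := by
  classical
  have hstep : ∀ (p : {W : Set Y // IsClopen W ∧ W.Nonempty}) (n : ℕ),
      ∃ q : {W : Set Y // IsClopen W ∧ W.Nonempty},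
        q.1 ⊆ p.1 ∧ Metric.diam q.1 ≤ (1/2)^n := by
    intro p n
    obtain ⟨W', h1, h2, h3, h4⟩ := shrink hrcl hrefl hanti htot hfr p.2.1.isOpen p.2.2
      (show (0:ℝ) < (1/2)^n by positivity)
    exact ⟨⟨W', h1, h2⟩, h3, h4⟩
  obtain ⟨V0, hV0c, hV0ne, hV0sub, -⟩ := shrink hrcl hrefl hanti htot hfr hV hne one_pos
  choose F hF1 hF2 using hstep
  let g : ℕ → {W : Set Y // IsClopen W ∧ W.Nonempty} :=
    fun n => Nat.rec ⟨V0, hV0c, hV0ne⟩ (fun k pk => F pk k) n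
  have hgsucc : ∀ n, g (n+1) = F (g n) n := fun n => rfl
  have hgsub : ∀ n, (g (n+1)).1 ⊆ (g n).1 := fun n => hF1 (g n) n
  have hgdiam : ∀ n, Metric.diam (g (n+1)).1 ≤ (1/2)^n := fun n => hF2 (g n) n
  have hgclosed : ∀ n, IsClosed (g n).1 := fun n => (g n).2.1.isClosed
  have hnonempty : (⋂ n, (g n).1).Nonempty := by
    apply IsCompact.nonempty_iInter_of_sequence_nonempty_isCompact_isClosed _ hgsub
      (fun n => (g n).2.2) ((hgclosed 0).isCompact) hgclosed
  obtain ⟨x, hx⟩ := hnonempty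
  simp only [Set.mem_iInter] at hx
  refine ⟨x, hV0sub (hx 0), ?_⟩
  apply Set.Subset.antisymm
  · intro y hy
    have hdist : ∀ n : ℕ, dist y x ≤ (1/2)^n := by
      intro n
      have hcomp : connectedComponent x ⊆ (g (n+1)).1 :=
        isPreconnected_connectedComponent.subset_isClopen (g (n+1)).2.1
          ⟨x, mem_connectedComponent, hx (n+1)⟩
      exact Metric.dist_le_diam_of_mem ((hgclosed (n+1)).isCompact.isBounded)
        (hcomp hy) (hcomp mem_connectedComponent) |>.trans (hgdiam n)
    have h0 : dist y x ≤ 0 := by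
      refine ge_of_tendsto (tendsto_pow_atTop_nhds_zero_of_lt_one (by norm_num) (by norm_num))
        (Filter.Eventually.of_forall hdist)
    simp only [Set.mem_singleton_iff]
    exact dist_le_zero.mp h0
  · intro y hy
    simp only [Set.mem_singleton_iff] at hy
    exact hy ▸ mem_connectedComponent

include hfr in
/-- every nonempty clopen set contains an arc component of positive diameter -/
theorem arc_in {W : Set Y} (hW : IsClopen W) (hne : W.Nonempty) :
    ∃ w : Y, connectedComponent w ⊆ W ∧ 0 < Metric.diam (connectedComponent w) := by
  obtain ⟨x0, hx0⟩ := hne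
  obtain ⟨w, harc, a, b, hab, haO, hbO, hepa, hepb⟩ := hfr W W hW.isOpen hW.isOpen
    ⟨x0, ⟨x0, hx0, mem_connectedComponent⟩, ⟨x0, hx0, mem_connectedComponent⟩⟩
  obtain ⟨_, haA, -⟩ := hepa
  obtain ⟨_, hbA, -⟩ := hepb
  refine ⟨w, isPreconnected_connectedComponent.subset_isClopen hW ⟨a, haA, haO⟩, ?_⟩
  have hbdd : Bornology.IsBounded (connectedComponent w) :=
    (isClosed_connectedComponent.isCompact).isBounded
  have := Metric.dist_le_diam_of_mem hbdd haA hbA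
  have hpos : 0 < dist a b := dist_pos.mpr hab
  linarith

include hrcl hrefl hanti htot hfr in
/-- children lemma: split a clopen set into infinitely many small disjoint clopen pieces
covering its singleton-component points -/
theorem children {W : Set Y} (hW : IsClopen W) (hne : W.Nonempty) {ε : ℝ} (hε : 0 < ε) :
    ∃ c : ℕ → Set Y,
      (∀ n, IsClopen (c n)) ∧ (∀ n, (c n).Nonempty) ∧ (∀ n, c n ⊆ W) ∧
      (∀ n, Metric.diam (c n) ≤ ε) ∧ Pairwise (Function.onFun Disjoint c) ∧
      (W ∩ {x : Y | connectedComponent x = {x}} ⊆ ⋃ n, c n) := by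
  classical
  set S : Set Y := {x : Y | connectedComponent x = {x}} with hSdef
  obtain ⟨w0, hw0sub, hw0pos⟩ := arc_in hfr hW hne
  set ε' : ℝ := min ε (Metric.diam (connectedComponent w0) / 2) with hε'def
  have hε' : 0 < ε' := lt_min hε (by linarith)
  -- small clopen neighborhoods of points of W ∩ S
  have hnbhd : ∀ x : Y, x ∈ W ∩ S → ∃ C : Set Y, IsClopen C ∧ x ∈ C ∧ C ⊆ W ∧
      Metric.diam C ≤ ε' := by
    rintro x ⟨hxW, hxS⟩
    have hcomp : connectedComponent x ⊆ Metric.ball x (ε'/3) ∩ W := by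
      rw [show connectedComponent x = {x} from hxS]
      rintro y rfl
      exact ⟨Metric.mem_ball_self (by linarith), hxW⟩
    obtain ⟨C, hCc, hCsup, hCsub⟩ := clopen_sandwich Y x (Metric.ball x (ε'/3) ∩ W)
      (Metric.isOpen_ball.inter hW.isOpen) hcomp
    refine ⟨C, hCc, hCsup mem_connectedComponent, fun y hy => (hCsub hy).2, ?_⟩
    calc Metric.diam C ≤ Metric.diam (Metric.ball x (ε'/3)) :=
          Metric.diam_mono (fun y hy => (hCsub hy).1) Metric.isBounded_ball
      _ ≤ 2 * (ε'/3) := Metric.diam_ball (by linarith)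
      _ ≤ ε' := by linarith
  choose! C hC1 hC2 hC3 hC4 using hnbhd
  -- countable subcover
  have hcover : (⋃ x : ↥(W ∩ S), C x.1) = ⋃ x : ↥(W ∩ S), C x.1 := rfl
  obtain ⟨T, hTc, hTeq⟩ := TopologicalSpace.isOpen_iUnion_countable
    (fun x : ↥(W ∩ S) => C x.1) (fun x => (hC1 x.1 x.2).isOpen)
  -- W ∩ S is nonempty by density
  have hWS : (W ∩ S).Nonempty := by
    obtain ⟨x, hx1, hx2⟩ := dense_sing hrcl hrefl hanti htot hfr hW.isOpen hne
    exact ⟨x, hx1, hx2⟩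
  have hTne : T.Nonempty := by
    by_contra hTe
    rw [Set.not_nonempty_iff_eq_empty] at hTe
    obtain ⟨x, hx⟩ := hWS
    have : (x : Y) ∈ ⋃ i : ↥(W ∩ S), C i.1 := Set.mem_iUnion.mpr ⟨⟨x, hx⟩, hC2 x hx⟩
    rw [← hTeq, hTe] at this
    simp at this
  obtain ⟨f, hf⟩ := hTc.exists_eq_range hTne
  set c0 : ℕ → Set Y := fun n => C (f n).1 with hc0def
  have hc0clopen : ∀ n, IsClopen (c0 n) := fun n => hC1 (f n).1 (f n).2
  have hc0sub : ∀ n, c0 n ⊆ W := fun n => hC3 (f n).1 (f n).2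
  have hc0diam : ∀ n, Metric.diam (c0 n) ≤ ε' := fun n => hC4 (f n).1 (f n).2
  have hc0cover : W ∩ S ⊆ ⋃ n, c0 n := by
    intro x hx
    have : (x : Y) ∈ ⋃ i : ↥(W ∩ S), C i.1 := Set.mem_iUnion.mpr ⟨⟨x, hx⟩, hC2 x hx⟩
    rw [← hTeq] at this
    simp only [Set.mem_iUnion] at this
    obtain ⟨i, hiT, hxi⟩ := this
    have : i ∈ Set.range f := hf ▸ hiT
    obtain ⟨n, rfl⟩ := this
    exact Set.mem_iUnion.mpr ⟨n, hxi⟩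
  -- disjointify
  set D : ℕ → Set Y := disjointed c0 with hDdef
  have hDclopen : ∀ n, IsClopen (D n) := by
    intro n
    have hpart : ∀ m, IsClopen ((partialSups c0) m) := by
      intro m
      induction m with
      | zero => simpa using hc0clopen 0
      | succ k ih => rw [partialSups_add_one]; exact ih.union (hc0clopen (k+1))
    cases n with
    | zero => simpa [hDdef, disjointed_zero] using hc0clopen 0
    | succ k =>
      rw [hDdef, disjointed_add_one]
      exact (hc0clopen (k+1)).diff (hpart k)
  have hDsub : ∀ n, D n ⊆ c0 n := fun n => disjointed_subset c0 n
  have hDdiam : ∀ n, Metric.diam (D n) ≤ ε' := by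
    intro n
    refine (Metric.diam_mono (hDsub n) ?_).trans (hc0diam n)
    exact ((hc0clopen n).isClosed.isCompact).isBounded
  have hDdisj : Pairwise (Function.onFun Disjoint D) := disjoint_disjointed c0
  have hDcover : W ∩ S ⊆ ⋃ n, D n := by
    rw [hDdef, iUnion_disjointed]
    exact hc0cover
  -- the set of indices with nonempty pieces is infinite
  set K : Set ℕ := {n | (D n).Nonempty} with hKdef
  have hKinf : K.Infinite := by
    by_contra hKfin
    rw [Set.not_infinite] at hKfin
    have hEclosed : IsClosed (⋃ n ∈ K, D n) :=
      hKfin.isClosed_biUnion (fun n _ => (hDclopen n).isClosed)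
    have hEcover : W ⊆ ⋃ n ∈ K, D n := by
      have hWcl : W ⊆ closure (W ∩ S) := by
        intro y hyW
        rw [_root_.mem_closure_iff]
        intro O hO hyO
        obtain ⟨z, hz1, hz2⟩ := dense_sing hrcl hrefl hanti htot hfr (hO.inter hW.isOpen)
          ⟨y, hyO, hyW⟩
        exact ⟨z, hz1.1, hz1.2, hz2⟩
      have hsub2 : W ∩ S ⊆ ⋃ n ∈ K, D n := by
        intro x hx
        obtain ⟨n, hn⟩ := Set.mem_iUnion.mp (hDcover hx)
        exact Set.mem_biUnion ⟨x, hn⟩ hn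
      calc W ⊆ closure (W ∩ S) := hWcl
        _ ⊆ closure (⋃ n ∈ K, D n) := closure_mono hsub2
        _ = ⋃ n ∈ K, D n := hEclosed.closure_eq
    -- the arc component lands in one piece
    obtain ⟨y0, hy0⟩ : (connectedComponent w0).Nonempty := ⟨w0, mem_connectedComponent⟩
    obtain ⟨n, hnK, hyn⟩ := by
      have := hEcover (hw0sub hy0)
      simpa only [Set.mem_iUnion, exists_prop] using this
    have hAsub : connectedComponent w0 ⊆ D n :=
      isPreconnected_connectedComponent.subset_isClopen (hDclopen n) ⟨y0, hy0, hyn⟩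
    have : Metric.diam (connectedComponent w0) ≤ ε' := by
      refine (Metric.diam_mono hAsub ?_).trans (hDdiam n)
      exact ((hDclopen n).isClosed.isCompact).isBounded
    have hhalf : ε' ≤ Metric.diam (connectedComponent w0) / 2 := min_le_right _ _
    linarith
  -- enumerate the nonempty pieces
  haveI : Infinite ↥K := hKinf.to_subtype
  haveI : Countable ↥K := (Set.to_countable K).to_subtype
  obtain ⟨d⟩ := (nonempty_denumerable_iff (α := ↥K)).mpr ⟨inferInstance, inferInstance⟩
  obtain ⟨e⟩ : Nonempty (ℕ ≃ ↥K) := ⟨(@Denumerable.eqv ↥K d).symm⟩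
  refine ⟨fun n => D (e n).1, fun n => hDclopen _, fun n => (e n).2, fun n => hDsub _ |>.trans
    (hc0sub _), fun n => (hDdiam _).trans (le_trans (le_refl _) (min_le_left _ _)),
    ?_, ?_⟩
  · intro m n hmn
    have : (e m).1 ≠ (e n).1 := fun h => hmn (e.injective (Subtype.ext h))
    exact hDdisj this
  · intro x hx
    obtain ⟨n, hn⟩ := Set.mem_iUnion.mp (hDcover hx)
    have hnK : n ∈ K := ⟨x, hn⟩
    refine Set.mem_iUnion.mpr ⟨e.symm ⟨n, hnK⟩, ?_⟩
    simpa using hn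

include hrcl hrefl hanti htot hfr in
theorem fence_homeo [Nonempty Y] :
    Nonempty ({x : Y // connectedComponent x = {x}} ≃ₜ (ℕ → ℕ)) := by
  classical
  have H : ∀ (W : Set Y) (k : ℕ), ∃ c : ℕ → Set Y, IsClopen W → W.Nonempty →
      ((∀ n, IsClopen (c n)) ∧ (∀ n, (c n).Nonempty) ∧ (∀ n, c n ⊆ W) ∧
       (∀ n, Metric.diam (c n) ≤ (1/2)^k) ∧ Pairwise (Function.onFun Disjoint c) ∧
       (W ∩ {x : Y | connectedComponent x = {x}} ⊆ ⋃ n, c n)) := by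
    intro W k
    by_cases h : IsClopen W ∧ W.Nonempty
    · obtain ⟨c, hc1, hc2, hc3, hc4, hc5, hc6⟩ := children hrcl hrefl hanti htot hfr h.1 h.2
        (show (0:ℝ) < (1/2)^k by positivity)
      exact ⟨c, fun _ _ => ⟨hc1, hc2, hc3, hc4, hc5, hc6⟩⟩
    · exact ⟨fun _ => W, fun h1 h2 => absurd ⟨h1, h2⟩ h⟩
  choose cf hcf using H
  set V : (ℕ → ℕ) → ℕ → Set Y :=
    fun f n => Nat.rec Set.univ (fun k Vk => cf Vk k (f k)) n with hVdef
  have hVsucc : ∀ f n, V f (n+1) = cf (V f n) n (f n) := fun f n => rfl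
  have hInv : ∀ f n, IsClopen (V f n) ∧ (V f n).Nonempty := by
    intro f n
    induction n with
    | zero => exact ⟨isClopen_univ, Set.univ_nonempty⟩
    | succ k ih =>
      obtain ⟨h1, h2, -⟩ := hcf (V f k) k ih.1 ih.2
      rw [hVsucc f k]
      exact ⟨h1 (f k), h2 (f k)⟩
  have spec : ∀ f n, (∀ m, IsClopen (cf (V f n) n m)) ∧ (∀ m, (cf (V f n) n m).Nonempty) ∧
      (∀ m, cf (V f n) n m ⊆ V f n) ∧ (∀ m, Metric.diam (cf (V f n) n m) ≤ (1/2)^n) ∧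
      Pairwise (Function.onFun Disjoint (cf (V f n) n)) ∧
      (V f n ∩ {x : Y | connectedComponent x = {x}} ⊆ ⋃ m, cf (V f n) n m) :=
    fun f n => hcf (V f n) n (hInv f n).1 (hInv f n).2
  have hsub : ∀ f n, V f (n+1) ⊆ V f n := by
    intro f n; rw [hVsucc]; exact (spec f n).2.2.1 (f n)
  have hmono : ∀ (f : ℕ → ℕ) (m n : ℕ), m ≤ n → V f n ⊆ V f m := by
    intro f m n h
    induction n, h using Nat.le_induction with
    | base => exact subset_rfl
    | succ n hmn ih => exact ((hsub f n).trans ih)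
  have hdiam : ∀ f n, Metric.diam (V f (n+1)) ≤ (1/2)^n := by
    intro f n; rw [hVsucc]; exact (spec f n).2.2.2.1 (f n)
  have hagree : ∀ (n : ℕ) (f g : ℕ → ℕ), (∀ i, i < n → f i = g i) → V f n = V g n := by
    intro n
    induction n with
    | zero => intro f g _; rfl
    | succ k ih =>
      intro f g h
      rw [hVsucc, hVsucc, ih f g (fun i hi => h i (hi.trans (Nat.lt_succ_self k))),
        h k (Nat.lt_succ_self k)]
  have hdisj : ∀ (n : ℕ) (f g : ℕ → ℕ), (∀ i, i < n → f i = g i) → f n ≠ g n →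
      Disjoint (V f (n+1)) (V g (n+1)) := by
    intro n f g hag hne
    rw [hVsucc, hVsucc, ← hagree n f g hag]
    exact (spec f n).2.2.2.2.1 hne
  have hcov : ∀ (f : ℕ → ℕ) (n : ℕ) (x : Y), connectedComponent x = {x} → x ∈ V f n →
      ∃ m, x ∈ cf (V f n) n m := by
    intro f n x hxS hxV
    exact Set.mem_iUnion.mp ((spec f n).2.2.2.2.2 ⟨hxV, hxS⟩)
  have hbr : ∀ f : ℕ → ℕ, (⋂ n, V f n).Nonempty := by
    intro f
    exact IsCompact.nonempty_iInter_of_sequence_nonempty_isCompact_isClosed _ (hsub f)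
      (fun n => (hInv f n).2) ((hInv f 0).1.isClosed.isCompact)
      (fun n => (hInv f n).1.isClosed)
  set Φ : (ℕ → ℕ) → Y := fun f => (hbr f).some with hΦdef
  have hΦ : ∀ f n, Φ f ∈ V f n := fun f n => Set.mem_iInter.mp (hbr f).some_mem n
  have hzero : ∀ (y z : Y), (∀ n : ℕ, dist y z ≤ (1/2)^n) → y = z := by
    intro y z h
    have : dist y z ≤ 0 :=
      ge_of_tendsto (tendsto_pow_atTop_nhds_zero_of_lt_one (by norm_num) (by norm_num))
        (Filter.Eventually.of_forall h)
    exact dist_le_zero.mp this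
  have huniq : ∀ (f : ℕ → ℕ) (y z : Y), (∀ n, y ∈ V f n) → (∀ n, z ∈ V f n) → y = z := by
    intro f y z hy hz
    refine hzero y z fun n => ?_
    exact (Metric.dist_le_diam_of_mem ((hInv f (n+1)).1.isClosed.isCompact.isBounded)
      (hy (n+1)) (hz (n+1))).trans (hdiam f n)
  have hΦS : ∀ f, connectedComponent (Φ f) = {Φ f} := by
    intro f
    apply Set.Subset.antisymm
    · intro y hy
      have hcomp : ∀ n, connectedComponent (Φ f) ⊆ V f n := fun n =>
        isPreconnected_connectedComponent.subset_isClopen (hInv f n).1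
          ⟨Φ f, mem_connectedComponent, hΦ f n⟩
      have : y = Φ f := huniq f y (Φ f) (fun n => hcomp n hy) (hΦ f)
      exact this ▸ rfl
    · intro y hy
      simp only [Set.mem_singleton_iff] at hy
      exact hy ▸ mem_connectedComponent
  have mem_agree : ∀ (k : ℕ) (f g : ℕ → ℕ) (x : Y), x ∈ V f k → x ∈ V g k →
      ∀ i, i < k → f i = g i := by
    intro k f g x hxf hxg i
    induction i using Nat.strong_induction_on with
    | _ i IH =>
      intro hik
      by_contra hne
      have hag : ∀ j, j < i → f j = g j := fun j hj => IH j hj (hj.trans hik)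
      have hd := hdisj i f g hag hne
      exact Set.disjoint_left.mp hd (hmono f (i+1) k hik hxf) (hmono g (i+1) k hik hxg)
  have hΦinj : Function.Injective Φ := by
    intro f g h
    funext i
    exact mem_agree (i+1) f g (Φ f) (hΦ f (i+1)) (h ▸ hΦ g (i+1)) i (Nat.lt_succ_self i)
  -- surjectivity
  have hsurj : ∀ x : Y, connectedComponent x = {x} → ∃ f, Φ f = x := by
    intro x hxS
    set step : (ℕ → ℕ) → ℕ → ℕ :=
      fun F n => if h : ∃ m, x ∈ cf (V F n) n m then h.choose else 0 with hstepdef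
    set F : ℕ → (ℕ → ℕ) :=
      fun n => Nat.rec (fun _ => 0) (fun k Fk => Function.update Fk k (step Fk k)) n with hFdef
    have hFsucc : ∀ n, F (n+1) = Function.update (F n) n (step (F n) n) := fun n => rfl
    have hFagree : ∀ n i, i < n → F (n+1) i = F n i := by
      intro n i hi
      rw [hFsucc]
      exact Function.update_of_ne (Nat.ne_of_lt hi) _ _
    have hFagree' : ∀ m n i, i < m → m ≤ n → F m i = F n i := by
      intro m n i hi h
      induction n, h using Nat.le_induction with
      | base => rfl
      | succ n hmn ih => rw [ih, ← hFagree n i (lt_of_lt_of_le hi hmn)]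
    set f : ℕ → ℕ := fun i => F (i+1) i with hfdef
    have hfF : ∀ n i, i < n → f i = F n i := fun n i hi => hFagree' (i+1) n i (Nat.lt_succ_self i) hi
    have hmemF : ∀ n, x ∈ V (F n) n := by
      intro n
      induction n with
      | zero => exact Set.mem_univ x
      | succ k ih =>
        have hex : ∃ m, x ∈ cf (V (F k) k) k m := hcov (F k) k x hxS ih
        have h1 : V (F (k+1)) k = V (F k) k :=
          hagree k (F (k+1)) (F k) (fun i hi => hFagree k i hi)
        rw [hVsucc, h1]
        have h2 : F (k+1) k = step (F k) k := by
          rw [hFsucc]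
          exact Function.update_self _ _ _
        rw [h2, hstepdef]
        simp only [dif_pos hex]
        exact hex.choose_spec
    have hxmem : ∀ n, x ∈ V f n := by
      intro n
      rw [hagree n f (F n) (fun i hi => hfF n i hi)]
      exact hmemF n
    exact ⟨f, huniq f (Φ f) x (hΦ f) hxmem⟩
  -- the equivalence
  set Ψ : {x : Y // connectedComponent x = {x}} → (ℕ → ℕ) :=
    fun x => (hsurj x.1 x.2).choose with hΨdef
  have hΦΨ : ∀ x : {x : Y // connectedComponent x = {x}}, Φ (Ψ x) = x.1 :=
    fun x => (hsurj x.1 x.2).choose_spec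
  set e : (ℕ → ℕ) ≃ {x : Y // connectedComponent x = {x}} :=
    { toFun := fun f => ⟨Φ f, hΦS f⟩
      invFun := Ψ
      left_inv := fun f => hΦinj (hΦΨ ⟨Φ f, hΦS f⟩)
      right_inv := fun x => Subtype.ext (hΦΨ x) } with hedef
  -- continuity of Φ
  have hΦcont : Continuous Φ := by
    rw [continuous_iff_continuousAt]
    intro f
    rw [ContinuousAt, Metric.tendsto_nhds]
    intro ε hε
    obtain ⟨n, hn⟩ := exists_pow_lt_of_lt_one hε (show (1/2:ℝ) < 1 by norm_num)
    have hopen : IsOpen {g : ℕ → ℕ | ∀ i ∈ Finset.range (n+1), g i = f i} := by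
      have heq : {g : ℕ → ℕ | ∀ i ∈ Finset.range (n+1), g i = f i} =
          ⋂ i ∈ Finset.range (n+1), (fun g : ℕ → ℕ => g i) ⁻¹' {f i} := by
        ext g; simp
      rw [heq]
      exact isOpen_biInter_finset
        (fun i _ => (continuous_apply i).isOpen_preimage _ (isOpen_discrete _))
    refine Filter.eventually_of_mem (hopen.mem_nhds (by simp)) ?_
    intro g hg
    have hVeq : V g (n+1) = V f (n+1) :=
      hagree (n+1) g f (fun i hi => hg i (Finset.mem_range.mpr hi))
    have h1 : Φ g ∈ V f (n+1) := hVeq ▸ hΦ g (n+1)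
    calc dist (Φ g) (Φ f)
        ≤ Metric.diam (V f (n+1)) :=
          Metric.dist_le_diam_of_mem ((hInv f (n+1)).1.isClosed.isCompact.isBounded) h1
            (hΦ f (n+1))
      _ ≤ (1/2)^n := hdiam f n
      _ < ε := hn
  -- continuity of Ψ
  have hΨcont : Continuous Ψ := by
    rw [continuous_pi_iff]
    intro i
    rw [continuous_discrete_rng]
    intro m
    have heq : (fun x => Ψ x i) ⁻¹' {m} =
        ⋃ (f : ℕ → ℕ) (_ : f i = m),
          (Subtype.val ⁻¹' (V f (i+1)) : Set {x : Y // connectedComponent x = {x}}) := by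
      ext x
      simp only [Set.mem_preimage, Set.mem_singleton_iff, Set.mem_iUnion]
      constructor
      · intro h
        exact ⟨Ψ x, h, (hΦΨ x) ▸ hΦ (Ψ x) (i+1)⟩
      · rintro ⟨f, hfi, hxf⟩
        have hx1 : x.1 ∈ V (Ψ x) (i+1) := (hΦΨ x) ▸ hΦ (Ψ x) (i+1)
        have := mem_agree (i+1) f (Ψ x) x.1 hxf hx1 i (Nat.lt_succ_self i)
        rw [← this, hfi]
    exact heq ▸ isOpen_iUnion fun f => isOpen_iUnion fun _ =>
      continuous_subtype_val.isOpen_preimage _ (hInv f (i+1)).1.isOpen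
  exact ⟨Homeomorph.mk e.symm hΨcont (hΦcont.subtype_mk _)⟩
end Fence
end FraisseFenceAux

/-- The subspace of the Fraïssé fence consisting of the points whose connected component is
a singleton is homeomorphic to the Baire space ℕ^ℕ. -/
theorem stmt_19 (Y : Type*) [TopologicalSpace Y] (hY : IsFraisseFence Y) :
    Nonempty ({x : Y // connectedComponent x = {x}} ≃ₜ (ℕ → ℕ)) := by
  obtain ⟨hne, ⟨⟨hcomp, hmetr, hdich⟩, ⟨r, ⟨⟨hrcl, hrefl, hanti, htrans⟩, htot⟩⟩⟩, hfr⟩ := hY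
  haveI := hne
  haveI := hcomp
  haveI := hmetr
  letI : MetricSpace Y := TopologicalSpace.metrizableSpaceMetric Y
  exact fence_homeo hrcl hrefl hanti htot hfr
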